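/- Let n ≥ 1, let W be an n×n weight matrix with all entries in {1, 2, 3, …} ∪ {∞} (strictly positive weights), let d denote the shortest-walk distance induced by W, and let Z ⊆ {1,…,n} be a nonempty set of terminals with d(v, s(v)) < ∞ for every vertex v, where s(v) is the chosen nearest terminal of v. Suppose par : {1,…,n} → {1,…,n} satisfies par(z) = z for every z ∈ Z and d(v, s(v)) = W(v, par(v)) + d(par(v), s(v)) for every v ∉ Z. Then for every vertex v there exists k ∈ ℕ such that the k-th iterate par^k(v) equals s(v); that is, repeatedly following parents from any vertex reaches its chosen terminal. -/

import Mathlib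

/-- The weight of the walk `q 0, q 1, …, q m` (a walk with `m` edges):
`Σ_{i<m} W (q i) (q (i+1))`. The empty walk (`m = 0`) has weight `0`. -/
def walkWeight {n : ℕ} (W : Fin n → Fin n → ℕ∞) {m : ℕ}
    (q : Fin (m + 1) → Fin n) : ℕ∞ :=
  ∑ i : Fin m, W (q i.castSucc) (q i.succ)

/-- The shortest-walk distance `d(u,v)`: the infimum over all walks of any length
from `u` to `v` of the walk weight. -/
noncomputable def walkDist {n : ℕ} (W : Fin n → Fin n → ℕ∞) (u v : Fin n) : ℕ∞ :=
  ⨅ m : ℕ,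
    (Finset.univ.filter fun q : Fin (m + 1) → Fin n =>
        q 0 = u ∧ q (Fin.last m) = v).inf
      fun q => walkWeight W q

lemma walkDist_self {n : ℕ} (W : Fin n → Fin n → ℕ∞) (v : Fin n) :
    walkDist W v v = 0 := by
  refine le_antisymm ?_ bot_le
  refine le_trans (iInf_le _ 0) ?_
  refine le_trans (Finset.inf_le (b := fun _ : Fin 1 => v) ?_) ?_
  · simp
  · simp [walkWeight]

lemma one_le_walkDist {n : ℕ} (W : Fin n → Fin n → ℕ∞) (hpos : ∀ i j, 1 ≤ W i j)
    {v z : Fin n} (h : v ≠ z) : 1 ≤ walkDist W v z := by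
  refine le_iInf fun m => ?_
  refine Finset.le_inf fun q hq => ?_
  simp only [Finset.mem_filter] at hq
  obtain ⟨-, hq0, hql⟩ := hq
  match m with
  | 0 => exact absurd (hq0.symm.trans hql) h
  | m + 1 =>
    calc (1 : ℕ∞) ≤ W (q (0 : Fin (m+1)).castSucc) (q (0 : Fin (m+1)).succ) := hpos _ _
      _ ≤ walkWeight W q := Finset.single_le_sum
        (f := fun i : Fin (m+1) => W (q i.castSucc) (q i.succ))
        (fun i _ => zero_le) (Finset.mem_univ _)

lemma walkDist_le_add {n : ℕ} (W : Fin n → Fin n → ℕ∞) (v u z : Fin n) :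
    walkDist W v z ≤ W v u + walkDist W u z := by
  rcases eq_or_ne (walkDist W u z) ⊤ with h | h
  · simp [h]
  -- attain the infimum
  obtain ⟨c, hc⟩ := Option.ne_none_iff_exists'.mp h
  have hlt : walkDist W u z < (c : ℕ∞) + 1 := by rw [hc]; exact (ENat.lt_add_one_iff (ENat.coe_ne_top c)).mpr le_rfl
  rw [walkDist, iInf_lt_iff] at hlt
  obtain ⟨m, hm⟩ := hlt
  rw [Finset.inf_lt_iff] at hm
  obtain ⟨q, hq, hwq⟩ := hm
  simp only [Finset.mem_filter] at hq
  obtain ⟨-, hq0, hql⟩ := hq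
  have hwle : walkDist W u z ≤ walkWeight W q :=
    le_trans (iInf_le _ m) (Finset.inf_le (by simp [hq0, hql]))
  -- prepend v
  have : walkDist W v z ≤ W v u + walkWeight W q := by
    refine le_trans (iInf_le _ (m + 1)) ?_
    refine le_trans (Finset.inf_le (b := Fin.cons v q) ?_) ?_
    · simp only [Finset.mem_filter, Finset.mem_univ, true_and]
      constructor
      · exact Fin.cons_zero _ _
      · rw [← Fin.succ_last, Fin.cons_succ, hql]
    · rw [walkWeight, Fin.sum_univ_succ]
      gcongr
      · simp [Fin.cons_zero, Fin.cons_succ, hq0]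
      · rw [walkWeight]
        refine le_of_eq (Finset.sum_congr rfl fun i _ => ?_)
        rw [← Fin.succ_castSucc, Fin.cons_succ, Fin.cons_succ]
  refine le_trans this ?_
  gcongr
  rw [hc]
  exact (ENat.lt_add_one_iff (ENat.coe_ne_top c)).mp hwq
/-- `s` assigns to each vertex its chosen nearest terminal: `s x` is the terminal
`z ∈ Z` minimizing the pair `(d(x,z), z)` lexicographically (nearest terminal,
ties broken by smallest label). -/
def ChosenNearestTerminal {n : ℕ} (W : Fin n → Fin n → ℕ∞) (Z : Finset (Fin n))
    (s : Fin n → Fin n) : Prop :=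
  ∀ x, s x ∈ Z ∧ ∀ z ∈ Z,
    walkDist W x (s x) < walkDist W x z ∨
      (walkDist W x (s x) = walkDist W x z ∧ ((s x : ℕ) ≤ (z : ℕ)))

/-- With strictly positive weights (entries in `{1, 2, …} ∪ {∞}`),
a nonempty terminal set `Z` with every vertex at finite distance from its chosen
terminal, and a parent map `par` fixing terminals and taking a first hop on a
shortest walk to the chosen terminal at every non-terminal, repeatedly following
parents from any vertex reaches its chosen terminal: `∃ k, par^[k] v = s v`. -/
theorem parent_iterate_reaches_terminal (n : ℕ) (hn : 1 ≤ n)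
    (W : Fin n → Fin n → ℕ∞) (hpos : ∀ i j, 1 ≤ W i j)
    (Z : Finset (Fin n)) (hZ : Z.Nonempty)
    (s : Fin n → Fin n) (hs : ChosenNearestTerminal W Z s)
    (hfin : ∀ v, walkDist W v (s v) < ⊤)
    (par : Fin n → Fin n)
    (hparZ : ∀ z ∈ Z, par z = z)
    (hpar : ∀ v ∉ Z, walkDist W v (s v) = W v (par v) + walkDist W (par v) (s v)) :
    ∀ v : Fin n, ∃ k : ℕ, par^[k] v = s v := by
  -- vertices at distance 0 equal their terminal
  have hzero : ∀ v : Fin n, walkDist W v (s v) = 0 → s v = v := by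
    intro v h
    by_contra hne
    have h1 := one_le_walkDist W hpos (fun hh => hne hh.symm)
    rw [h] at h1
    simp at h1
  -- on terminals, s is the identity
  have hsZ : ∀ v ∈ Z, s v = v := by
    intro v hv
    rcases (hs v).2 v hv with h | ⟨h, -⟩
    · rw [walkDist_self] at h
      exact absurd h (by simp)
    · exact hzero v (h.trans (walkDist_self W v))
  -- key step
  have step : ∀ v ∉ Z, s (par v) = s v ∧
      walkDist W (par v) (s v) < walkDist W v (s v) := by
    intro v hv
    set u := par v with hu
    have h1 := hpar v hv
    have hWne : W v u ≠ ⊤ := by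
      intro h
      rw [h, top_add] at h1
      exact (hfin v).ne h1
    have hdu_ne : walkDist W u (s v) ≠ ⊤ := by
      intro h
      rw [h, add_top] at h1
      exact (hfin v).ne h1
    have h2 := (hs u).2 (s v) (hs v).1
    have hub : walkDist W u (s u) ≤ walkDist W u (s v) := by
      rcases h2 with h | ⟨h, -⟩
      exacts [h.le, h.le]
    have h4 := walkDist_le_add W v u (s u)
    have h3 := (hs v).2 (s u) (hs u).1
    have hva : walkDist W v (s v) ≤ walkDist W v (s u) := by
      rcases h3 with h | ⟨h, -⟩
      exacts [h.le, h.le]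
    have hchain : walkDist W v (s v) = W v u + walkDist W u (s u) := by
      refine le_antisymm (hva.trans h4) ?_
      rw [h1]
      gcongr
    have hcd : walkDist W u (s u) = walkDist W u (s v) :=
      WithTop.add_left_cancel hWne (hchain.symm.trans h1)
    have hb_le : (s u : ℕ) ≤ (s v : ℕ) := by
      rcases h2 with h | ⟨-, h⟩
      · exact absurd hcd h.ne
      · exact h
    have hveq : walkDist W v (s u) ≤ walkDist W v (s v) := by
      rw [hchain, ← hcd] at *
      exact h4
    have ha_le : (s v : ℕ) ≤ (s u : ℕ) := by
      rcases h3 with h | ⟨-, h⟩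
      · exact absurd hveq (not_le.mpr h)
      · exact h
    have hsu : s u = s v := Fin.ext (le_antisymm hb_le ha_le)
    refine ⟨hsu, ?_⟩
    rw [h1]
    calc walkDist W u (s v) < walkDist W u (s v) + 1 :=
          (ENat.lt_add_one_iff hdu_ne).mpr le_rfl
      _ = 1 + walkDist W u (s v) := add_comm _ _
      _ ≤ W v u + walkDist W u (s v) := by gcongr; exact hpos v u
  -- strong induction on toNat of the distance
  suffices H : ∀ N : ℕ, ∀ v : Fin n, (walkDist W v (s v)).toNat ≤ N →
      ∃ k : ℕ, par^[k] v = s v by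
    intro v
    exact H _ v le_rfl
  intro N
  induction N with
  | zero =>
    intro v hv
    have hd0 : walkDist W v (s v) = 0 :=
      (ENat.toNat_eq_zero.mp (Nat.le_zero.mp hv)).resolve_right (hfin v).ne
    exact ⟨0, (hzero v hd0).symm⟩
  | succ N ih =>
    intro v hv
    by_cases hvZ : v ∈ Z
    · exact ⟨0, (hsZ v hvZ).symm⟩
    · obtain ⟨hsu, hlt⟩ := step v hvZ
      have hlt' : (walkDist W (par v) (s v)).toNat < (walkDist W v (s v)).toNat := by
        have h1 := (hlt.trans (hfin v)).ne
        have h2 := (hfin v).ne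
        lift walkDist W (par v) (s v) to ℕ using h1 with a
        lift walkDist W v (s v) to ℕ using h2 with b
        simpa using hlt
      obtain ⟨k, hk⟩ := ih (par v) (by rw [hsu]; omega)
      exact ⟨k + 1, by rw [Function.iterate_succ_apply, hk, hsu]⟩
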